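/- Let a, Δ, r : E → ℝ≥0 on a finite set E with m elements, let K ≥ 1, q ≥ 2, T ≥ 3m. Suppose for every e, K^{q-2} r_e² a_e |Δ_e| ≤ K^q and (K²/m) ≤ r_e² a_e² (i.e., a_e ≥ (K/√m)/r_e). Then ∑_e r_e² (a_e + Δ_e/T)² ≤ ∑_e r_e² a_e² + (3/T)·∑_e r_e² a_e Δ_e. -/

import Mathlib

open Finset Real

theorem stmt_5 {E : Type*} [Fintype E] (a Δ r : E → ℝ) (K q T : ℝ)
    (ha : ∀ e, 0 ≤ a e) (hΔ : ∀ e, 0 ≤ Δ e) (hr : ∀ e, 0 ≤ r e)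
    (hK : 1 ≤ K) (hq : 2 ≤ q) (hT : 3 * (Fintype.card E : ℝ) ≤ T)
    (hlen : ∀ e, K ^ (q - 2) * r e ^ 2 * a e * |Δ e| ≤ K ^ q)
    (hlow : ∀ e, K ^ 2 / (Fintype.card E : ℝ) ≤ r e ^ 2 * a e ^ 2) :
    ∑ e, r e ^ 2 * (a e + Δ e / T) ^ 2 ≤
      (∑ e, r e ^ 2 * a e ^ 2) + (3 / T) * ∑ e, r e ^ 2 * a e * Δ e := by
  rcases isEmpty_or_nonempty E with hE | hE
  · simp
  have hK0 : (0:ℝ) < K := by linarith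
  have hm1 : (1:ℝ) ≤ (Fintype.card E : ℝ) := by
    exact_mod_cast Fintype.card_pos
  have hT0 : (0:ℝ) < T := by linarith
  rw [Finset.mul_sum, ← Finset.sum_add_distrib]
  apply Finset.sum_le_sum
  intro e _
  -- r e > 0 and a e > 0
  have hlow' : 0 < r e ^ 2 * a e ^ 2 := by
    refine lt_of_lt_of_le ?_ (hlow e)
    positivity
  have hre : 0 < r e := by
    rcases lt_or_eq_of_le (hr e) with h | h
    · exact h
    · exfalso; rw [← h] at hlow'; simp at hlow'
  have hae : 0 < a e := by
    rcases lt_or_eq_of_le (ha e) with h | h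
    · exact h
    · exfalso; rw [← h] at hlow'; simp at hlow'
  -- step 1 : r² a Δ ≤ K²
  have hKq2 : (0:ℝ) < K ^ (q - 2) := Real.rpow_pos_of_pos hK0 _
  have h1 : r e ^ 2 * a e * Δ e ≤ K ^ 2 := by
    have := hlen e
    rw [abs_of_nonneg (hΔ e)] at this
    have hq2 : K ^ q = K ^ (q - 2) * K ^ (2:ℕ) := by
      rw [← Real.rpow_natCast K 2, ← Real.rpow_add hK0]; norm_num
    rw [hq2] at this
    have h2' : K ^ (q - 2) * (r e ^ 2 * a e * Δ e) ≤ K ^ (q - 2) * K ^ 2 := by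
      calc K ^ (q - 2) * (r e ^ 2 * a e * Δ e) = K ^ (q - 2) * r e ^ 2 * a e * Δ e := by ring
        _ ≤ _ := this
    exact le_of_mul_le_mul_left h2' hKq2
  -- step 2 : Δ e ≤ (T/3) * a e
  have h2 : Δ e ≤ T / 3 * a e := by
    have hlow2 : K ^ 2 ≤ (Fintype.card E : ℝ) * (r e ^ 2 * a e ^ 2) := by
      have := hlow e
      rw [div_le_iff₀ (by linarith)] at this
      linarith [this]
    have h3 : r e ^ 2 * a e * Δ e ≤ (Fintype.card E : ℝ) * (r e ^ 2 * a e ^ 2) :=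
      le_trans h1 hlow2
    have hcancel : Δ e ≤ (Fintype.card E : ℝ) * a e := by
      have hpos : 0 < r e ^ 2 * a e := by positivity
      nlinarith [h3]
    have : (Fintype.card E : ℝ) * a e ≤ T / 3 * a e := by
      apply mul_le_mul_of_nonneg_right _ (ha e)
      linarith
    linarith
  -- step 3: Δ² ≤ T a Δ
  have h4 : Δ e ^ 2 ≤ T * a e * Δ e := by nlinarith [hΔ e, hT0]
  have hexp : (a e + Δ e / T) ^ 2 = a e ^ 2 + 2 * (a e * Δ e) / T + Δ e ^ 2 / T ^ 2 := by
    field_simp; ring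
  have h5 : Δ e ^ 2 / T ^ 2 ≤ a e * Δ e / T := by
    rw [div_le_div_iff₀ (by positivity) hT0]
    nlinarith [h4, hT0]
  have h6 : (a e + Δ e / T) ^ 2 ≤ a e ^ 2 + 3 / T * (a e * Δ e) := by
    rw [hexp]
    have : 2 * (a e * Δ e) / T + a e * Δ e / T = 3 / T * (a e * Δ e) := by ring
    linarith [h5]
  have := mul_le_mul_of_nonneg_left h6 (by positivity : (0:ℝ) ≤ r e ^ 2)
  calc r e ^ 2 * (a e + Δ e / T) ^ 2
      ≤ r e ^ 2 * (a e ^ 2 + 3 / T * (a e * Δ e)) := this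
    _ = r e ^ 2 * a e ^ 2 + 3 / T * (r e ^ 2 * a e * Δ e) := by ring
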